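/- Let κ be an infinite regular cardinal, let D and E be preorders, let X be a topological space and p ∈ X. If the neighborhood filter N(p,X) is cofinally equivalent to D × E and cf(D) < κ < add(E), then there is no escape sequence at p of length κ. -/

import Mathlib

universe u v w

/-- Two preorders are *cofinally equivalent* if there is a preorder (given here by a
reflexive transitive relation `le` on `R`) such that both are order isomorphic to
cofinal subsets of it. -/
def CofEquiv (P : Type u) (Q : Type v) [Preorder P] [Preorder Q] : Prop :=
  ∃ (R : Type (max u v)) (le : R → R → Prop),
    Reflexive le ∧ Transitive le ∧
    ∃ (f : P → R) (g : Q → R),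
      Function.Injective f ∧ Function.Injective g ∧
      (∀ a b : P, a ≤ b ↔ le (f a) (f b)) ∧
      (∀ a b : Q, a ≤ b ↔ le (g a) (g b)) ∧
      (∀ r : R, ∃ a : P, le r (f a)) ∧
      (∀ r : R, ∃ b : Q, le r (g b))

/-- The neighborhood filter of `p`, i.e. all sets whose interior contains `p`,
as a preorder under containment `⊇`. -/
def Nbhds (X : Type w) [TopologicalSpace X] (p : X) := {U : Set X // U ∈ nhds p}

instance (X : Type w) [TopologicalSpace X] (p : X) : Preorder (Nbhds X p) where
  le U V := Subtype.val V ⊆ Subtype.val U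
  le_refl _ := subset_rfl
  le_trans _ _ _ h1 h2 := Set.Subset.trans h2 h1

/-- `U` is an escape sequence at `p`: a decreasing (w.r.t. the index order) sequence
of neighborhoods of `p` whose intersection is not a neighborhood of `p`. -/
def IsEscapeSeq {X : Type w} [TopologicalSpace X] (p : X) {ι : Type u} [Preorder ι]
    (U : ι → Set X) : Prop :=
  (∀ i, U i ∈ nhds p) ∧ (∀ i j : ι, i ≤ j → U j ⊆ U i) ∧ (⋂ i, U i) ∉ nhds p

/-- The cofinality of a preorder: the least cardinality of a cofinal subset. -/
noncomputable def cofOf (D : Type u) [Preorder D] : Cardinal.{u} :=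
  sInf {c | ∃ s : Set D, (∀ d : D, ∃ x ∈ s, d ≤ x) ∧ Cardinal.mk s = c}

/-- If `N(p,X) ≡cf D × E`, `cf D < κ`, and `κ < add E` (expressed
faithfully, including the case `add E = ∞`, as: every subset of `E` of cardinality
at most `κ` has an upper bound), where `κ` is an infinite regular cardinal, then
there is no escape sequence at `p` of length `κ`. -/
theorem no_escape_seq_in_gap {X : Type w} [TopologicalSpace X] (p : X)
    (κ : Cardinal.{u}) (hκ : κ.IsRegular)
    (D E : Type u) [Preorder D] [Preorder E]
    (hcf : cofOf D < κ)
    (hadd : ∀ s : Set E, Cardinal.mk s ≤ κ → ∃ b : E, ∀ x ∈ s, x ≤ b)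
    (heq : CofEquiv (Nbhds X p) (D × E)) :
    ¬ ∃ U : κ.ord.ToType → Set X, IsEscapeSeq p U := by
  rintro ⟨U, hUnh, hUmono, hUint⟩
  -- get a small cofinal set in D
  have hne : {c | ∃ s : Set D, (∀ d : D, ∃ x ∈ s, d ≤ x) ∧ Cardinal.mk s = c}.Nonempty :=
    ⟨Cardinal.mk (Set.univ : Set D), Set.univ, fun d => ⟨d, Set.mem_univ d, le_refl d⟩, rfl⟩
  obtain ⟨S, hScof, hSmk⟩ := csInf_mem hne
  have hSlt : Cardinal.mk S < κ := hSmk.symm ▸ hcf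
  -- destructure cofinal equivalence
  obtain ⟨R, le, -, htrans, f, g, -, -, hf, hg, hfc, hgc⟩ := heq
  -- for each i, choose (d i, e i) above f (U i)
  have hde : ∀ i : κ.ord.ToType, ∃ de : D × E, le (f ⟨U i, hUnh i⟩) (g de) := fun i => hgc _
  choose de hde using hde
  -- choose for each i an element of S above (de i).1
  have hc : ∀ i : κ.ord.ToType, ∃ x : S, (de i).1 ≤ (x : D) := by
    intro i
    obtain ⟨x, hx, hxle⟩ := hScof (de i).1
    exact ⟨⟨x, hx⟩, hxle⟩
  choose c hc using hc
  -- some fiber of c is cofinal in the index type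
  have hcof : ∃ s0 : S, ∀ j : κ.ord.ToType, ∃ i : κ.ord.ToType, j ≤ i ∧ c i = s0 := by
    by_contra hcon
    push_neg at hcon
    choose j hj using hcon
    have hwo : IsWellOrder κ.ord.ToType (· < ·) := isWellOrder_lt
    have hbd : Set.Bounded (· < ·) (Set.range j) := by
      by_contra hnb
      have hcofin : IsCofinal (Set.range j) := by
        intro a
        by_contra ha
        push_neg at ha
        exact hnb ⟨a, fun b hb => ha b hb⟩
      have hle := Order.cof_le hcofin
      rw [Ordinal.cof_toType, hκ.cof_eq] at hle
      exact absurd (hle.trans Cardinal.mk_range_le) (not_le.mpr hSlt)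
    obtain ⟨b, hb⟩ := hbd
    have h1 : j (c b) ≤ b := le_of_lt (hb _ ⟨c b, rfl⟩)
    exact hj (c b) b h1 rfl
  obtain ⟨s0, hs0⟩ := hcof
  -- bound the E-components
  have hmkE : Cardinal.mk (Set.range fun i : κ.ord.ToType => (de i).2) ≤ κ := by
    calc Cardinal.mk (Set.range fun i : κ.ord.ToType => (de i).2)
          ≤ Cardinal.mk κ.ord.ToType := Cardinal.mk_range_le
      _ = κ := by rw [Cardinal.mk_toType, Cardinal.card_ord]
  obtain ⟨e0, he0⟩ := hadd _ hmkE
  -- choose a neighborhood V above g (s0, e0)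
  obtain ⟨V, hV⟩ := hfc (g ((s0 : D), e0))
  -- V is contained in every U i
  have hVsub : ∀ j : κ.ord.ToType, V.1 ⊆ U j := by
    intro j
    obtain ⟨i, hji, hci⟩ := hs0 j
    have h1 : (de i) ≤ ((s0 : D), e0) :=
      ⟨hci ▸ hc i, he0 _ ⟨i, rfl⟩⟩
    have h2 : le (f ⟨U i, hUnh i⟩) (f V) :=
      htrans (hde i) (htrans ((hg _ _).mp h1) hV)
    have h4 : V.1 ⊆ U i := (hf ⟨U i, hUnh i⟩ V).mpr h2
    exact h4.trans (hUmono j i hji)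
  exact hUint (Filter.mem_of_superset V.2 (Set.subset_iInter hVsub))
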